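/- Let X ⊆ ℝⁿ be a nonempty closed set that is geometrically derivable at x̄ ∈ X, and let f(x) := dist(x, X). Then f is semi-differentiable at x̄ and its semi-derivative is df(x̄)(w) = dist(w, T_X(x̄)) for every w ∈ ℝⁿ; that is, the full limit lim_{t↓0, w'→w} (dist(x̄ + t w', X) − 0)/t exists and equals dist(w, T_X(x̄)). -/

import Mathlib

open Filter Topology Set

/-- The subderivative `df(x̄)(w) := liminf_{t↓0, w'→w} (f(x̄ + t w') − f(x̄))/t`
of an extended-real-valued function. -/
noncomputable def subderiv {n : ℕ} (f : EuclideanSpace ℝ (Fin n) → EReal)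
    (x w : EuclideanSpace ℝ (Fin n)) : EReal :=
  Filter.liminf
    (fun p : ℝ × EuclideanSpace ℝ (Fin n) =>
      (((p.1)⁻¹ : ℝ) : EReal) * (f (x + p.1 • p.2) - f x))
    ((𝓝[>] (0:ℝ)) ×ˢ 𝓝 w)

/-- `F` is semi-differentiable at `x` for the direction `w` with semi-derivative `d`:
`d = lim_{t↓0, w'→w} (F(x + t w') − F(x))/t`. -/
def HasSemiderivAt {E V : Type*} [NormedAddCommGroup E] [NormedSpace ℝ E]
    [NormedAddCommGroup V] [NormedSpace ℝ V]
    (F : E → V) (x w : E) (d : V) : Prop :=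
  Filter.Tendsto (fun p : ℝ × E => (p.1)⁻¹ • (F (x + p.1 • p.2) - F x))
    ((𝓝[>] (0:ℝ)) ×ˢ 𝓝 w) (𝓝 d)

/-- The (Bouligand) tangent cone `T_X(x)`: all `w` such that `x + t k • v k ∈ X` for
some `t k ↓ 0` and `v k → w`. -/
def tangentConeAt' {E : Type*} [NormedAddCommGroup E] [NormedSpace ℝ E]
    (X : Set E) (x : E) : Set E :=
  {w | ∃ (t : ℕ → ℝ) (v : ℕ → E),
    Filter.Tendsto t Filter.atTop (𝓝[>] (0:ℝ)) ∧
    Filter.Tendsto v Filter.atTop (𝓝 w) ∧ ∀ k, x + t k • v k ∈ X}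

/-- `X` is geometrically derivable at `x ∈ X`: every tangent vector `w ∈ T_X(x)` is
derivable, i.e. realized as the right derivative at `0` of a curve `ζ : [0, ε] → X`
with `ζ 0 = x`. -/
def GeomDerivableAt {E : Type*} [NormedAddCommGroup E] [NormedSpace ℝ E]
    (X : Set E) (x : E) : Prop :=
  ∀ w ∈ tangentConeAt' X x, ∃ ε > (0:ℝ), ∃ ζ : ℝ → E,
    ζ 0 = x ∧ (∀ t ∈ Set.Icc (0:ℝ) ε, ζ t ∈ X) ∧
    Filter.Tendsto (fun t : ℝ => t⁻¹ • (ζ t - x)) (𝓝[>] (0:ℝ)) (𝓝 w)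

open Metric in
lemma seq_aux {n : ℕ}
    (X : Set (EuclideanSpace ℝ (Fin n))) (hXne : X.Nonempty) (hXcl : IsClosed X)
    (x : EuclideanSpace ℝ (Fin n)) (hx : x ∈ X)
    (hder : GeomDerivableAt X x) (w : EuclideanSpace ℝ (Fin n))
    (t : ℕ → ℝ) (ws : ℕ → EuclideanSpace ℝ (Fin n))
    (ht : Tendsto t atTop (𝓝[>] (0:ℝ))) (hws : Tendsto ws atTop (𝓝 w)) :
    Tendsto (fun k => (t k)⁻¹ * Metric.infDist (x + t k • ws k) X) atTop
      (𝓝 (Metric.infDist w (tangentConeAt' X x))) := by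
  set T := tangentConeAt' X x with hTdef
  set d := Metric.infDist w T with hd
  set g : ℕ → ℝ := fun k => (t k)⁻¹ * Metric.infDist (x + t k • ws k) X with hg
  have hT0 : (0 : EuclideanSpace ℝ (Fin n)) ∈ T := by
    refine ⟨fun k => ((k : ℝ) + 1)⁻¹, fun _ => 0, ?_, tendsto_const_nhds, by simp [hx]⟩
    refine tendsto_nhdsWithin_of_tendsto_nhds_of_eventually_within _ ?_
      (Eventually.of_forall fun k => Set.mem_Ioi.2 (by positivity))
    simpa [one_div] using tendsto_one_div_add_atTop_nhds_zero_nat (𝕜 := ℝ)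
  have hTne : T.Nonempty := ⟨0, hT0⟩
  have ht0 : Tendsto t atTop (𝓝 0) := ht.mono_right nhdsWithin_le_nhds
  have htpos : ∀ᶠ k in atTop, 0 < t k := ht.eventually self_mem_nhdsWithin
  rw [Metric.tendsto_nhds]
  intro ε hε
  have hεhalf : (0:ℝ) < ε / 2 := by linarith
  -- Upper bound part
  have hupper : ∀ᶠ k in atTop, g k - d < ε := by
    obtain ⟨u, huT, hu⟩ := (Metric.infDist_lt_iff hTne).1
      (show Metric.infDist w T < d + ε / 2 by simp [← hd]; linarith)
    obtain ⟨ε₀, hε₀, ζ, hζ0, hζX, hζd⟩ := hder u huT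
    have hcomp : Tendsto (fun k => (t k)⁻¹ • (ζ (t k) - x)) atTop (𝓝 u) := hζd.comp ht
    have hh : Tendsto (fun k => ‖ws k - (t k)⁻¹ • (ζ (t k) - x)‖) atTop (𝓝 ‖w - u‖) :=
      (hws.sub hcomp).norm
    have hwu : ‖w - u‖ < d + ε / 2 := by rwa [← dist_eq_norm]
    have hev1 : ∀ᶠ k in atTop, ‖ws k - (t k)⁻¹ • (ζ (t k) - x)‖ < d + ε / 2 :=
      hh.eventually_lt_const hwu
    have hev2 : ∀ᶠ k in atTop, t k < ε₀ := ht0.eventually_lt_const hε₀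
    filter_upwards [htpos, hev1, hev2] with k hk1 hk2 hk3
    have hkne : t k ≠ 0 := ne_of_gt hk1
    have hmem : ζ (t k) ∈ X := hζX _ ⟨le_of_lt hk1, le_of_lt hk3⟩
    have hle : Metric.infDist (x + t k • ws k) X ≤ dist (x + t k • ws k) (ζ (t k)) :=
      Metric.infDist_le_dist_of_mem hmem
    have heq : dist (x + t k • ws k) (ζ (t k)) = t k * ‖ws k - (t k)⁻¹ • (ζ (t k) - x)‖ := by
      rw [dist_eq_norm]
      have : x + t k • ws k - ζ (t k) = t k • (ws k - (t k)⁻¹ • (ζ (t k) - x)) := by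
        rw [smul_sub, smul_inv_smul₀ hkne]
        abel
      rw [this, norm_smul, Real.norm_eq_abs, abs_of_pos hk1]
    have : g k ≤ ‖ws k - (t k)⁻¹ • (ζ (t k) - x)‖ := by
      rw [hg]
      calc (t k)⁻¹ * Metric.infDist (x + t k • ws k) X
          ≤ (t k)⁻¹ * (t k * ‖ws k - (t k)⁻¹ • (ζ (t k) - x)‖) := by
            rw [← heq]; exact mul_le_mul_of_nonneg_left hle (by positivity)
        _ = ‖ws k - (t k)⁻¹ • (ζ (t k) - x)‖ := by field_simp
    linarith
  -- Lower bound part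
  have hlower : ∀ᶠ k in atTop, d - g k < ε := by
    by_contra hcon
    rw [Filter.not_eventually] at hcon
    have hfreq : ∃ᶠ k in atTop, 0 < t k ∧ g k ≤ d - ε := by
      refine (htpos.and_frequently (hcon.mono fun k hk => ?_))
      push_neg at hk; linarith
    obtain ⟨φ, hφ, hφP⟩ := Filter.extraction_of_frequently_atTop hfreq
    choose y hyX hyd using fun k => hXcl.exists_infDist_eq_dist hXne (x + t (φ k) • ws (φ k))
    set v : ℕ → EuclideanSpace ℝ (Fin n) := fun k => (t (φ k))⁻¹ • (y k - x) with hv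
    have htφpos : ∀ k, 0 < t (φ k) := fun k => (hφP k).1
    have hgv : ∀ k, g (φ k) = ‖ws (φ k) - v k‖ := by
      intro k
      have hkne : t (φ k) ≠ 0 := ne_of_gt (htφpos k)
      have : x + t (φ k) • ws (φ k) - y k = t (φ k) • (ws (φ k) - v k) := by
        rw [hv, smul_sub, smul_inv_smul₀ hkne]
        abel
      rw [hg]
      simp only [hyd k, dist_eq_norm, this, norm_smul, Real.norm_eq_abs,
        abs_of_pos (htφpos k)]
      field_simp
    -- boundedness of v
    have hwsφ : Tendsto (fun k => ws (φ k)) atTop (𝓝 w) := hws.comp hφ.tendsto_atTop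
    obtain ⟨C, hC⟩ := (Metric.isBounded_range_of_tendsto _ hwsφ).exists_norm_le
    have hvball : ∀ k, v k ∈ Metric.closedBall (0 : EuclideanSpace ℝ (Fin n)) (C + |d - ε|) := by
      intro k
      rw [Metric.mem_closedBall, dist_zero_right]
      have h1 : ‖v k‖ ≤ ‖ws (φ k)‖ + ‖ws (φ k) - v k‖ := by
        have := norm_sub_norm_le (ws (φ k)) (v k)
        have h2 := norm_sub_le (ws (φ k) - v k) (ws (φ k))
        calc ‖v k‖ = ‖ws (φ k) - (ws (φ k) - v k)‖ := by congr 1; abel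
          _ ≤ ‖ws (φ k)‖ + ‖ws (φ k) - v k‖ := norm_sub_le _ _
      have h3 : ‖ws (φ k) - v k‖ ≤ |d - ε| := le_trans ((hgv k) ▸ (hφP k).2) (le_abs_self _)
      have h4 : ‖ws (φ k)‖ ≤ C := hC _ ⟨k, rfl⟩
      linarith
    obtain ⟨u₀, -, ψ, hψ, hvψ⟩ :=
      tendsto_subseq_of_bounded Metric.isBounded_closedBall hvball
    have hu₀T : u₀ ∈ T := by
      refine ⟨fun j => t (φ (ψ j)), fun j => v (ψ j), ?_, hvψ, ?_⟩
      · exact ht.comp ((hφ.comp hψ).tendsto_atTop)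
      · intro j
        have hkne : t (φ (ψ j)) ≠ 0 := ne_of_gt (htφpos (ψ j))
        have : x + t (φ (ψ j)) • v (ψ j) = y (ψ j) := by
          rw [hv]; simp only [smul_inv_smul₀ hkne]; abel
        rw [this]; exact hyX (ψ j)
    have hlim : Tendsto (fun j => ‖ws (φ (ψ j)) - v (ψ j)‖) atTop (𝓝 ‖w - u₀‖) :=
      ((hwsφ.comp hψ.tendsto_atTop).sub hvψ).norm
    have hle1 : ‖w - u₀‖ ≤ d - ε :=
      le_of_tendsto hlim (Eventually.of_forall fun j => (hgv (ψ j)) ▸ (hφP (ψ j)).2)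
    have hle2 : d ≤ ‖w - u₀‖ := by
      rw [← dist_eq_norm]; exact Metric.infDist_le_dist_of_mem hu₀T
    linarith
  filter_upwards [hupper, hlower] with k h1 h2
  rw [Real.dist_eq, abs_sub_lt_iff]
  exact ⟨h1, h2⟩

/-- if the nonempty closed set `X` is geometrically derivable at `x̄ ∈ X`,
then `f = dist(·, X)` is semi-differentiable at `x̄` with `df(x̄)(w) = dist(w, T_X(x̄))`
for every `w`. -/
theorem dist_semidifferentiable_of_geomDerivable {n : ℕ}
    (X : Set (EuclideanSpace ℝ (Fin n))) (hXne : X.Nonempty) (hXcl : IsClosed X)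
    (x : EuclideanSpace ℝ (Fin n)) (hx : x ∈ X)
    (hder : GeomDerivableAt X x) :
    ∀ w : EuclideanSpace ℝ (Fin n),
      HasSemiderivAt (fun z => Metric.infDist z X) x w
        (Metric.infDist w (tangentConeAt' X x)) := by
  intro w
  unfold HasSemiderivAt
  rw [Filter.tendsto_iff_seq_tendsto]
  intro p hp
  rw [Filter.tendsto_prod_iff'] at hp
  have key := seq_aux X hXne hXcl x hx hder w _ _ hp.1 hp.2
  have h0 : Metric.infDist x X = 0 := Metric.infDist_zero_of_mem hx
  refine key.congr fun k => ?_
  simp [Function.comp, h0, smul_eq_mul]
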